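/- Let R be a ℤ-graded Noetherian ring and M a finitely generated graded R-module. If every graded submodule of M is a finite intersection of irreducible graded submodules, then every graded-irreducible graded submodule of M is irreducible. -/

import Mathlib

/-- A submodule `N` of `M` is irreducible if whenever `N = N₁ ⊓ N₂` for submodules
`N₁, N₂` of `M`, then `N = N₁` or `N = N₂`. -/
def Submodule.IsIrred {R M : Type*} [CommRing R] [AddCommGroup M] [Module R M]
    (N : Submodule R M) : Prop :=
  ∀ N₁ N₂ : Submodule R M, N = N₁ ⊓ N₂ → N = N₁ ∨ N = N₂

/-- A submodule is homogeneous (graded) w.r.t. a grading `ℳ` of `M` if it contains all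
homogeneous components of its elements. -/
def Submodule.IsHomogeneousWrt {R M : Type*} [CommRing R] [AddCommGroup M] [Module R M]
    (ℳ : ℤ → AddSubgroup M) [DirectSum.Decomposition ℳ] (N : Submodule R M) : Prop :=
  ∀ (i : ℤ) (x : M), x ∈ N → (DirectSum.decompose ℳ x i : M) ∈ N

/-- A graded submodule `N` is graded-irreducible if whenever `N = N₁ ⊓ N₂` for graded
submodules `N₁, N₂`, then `N = N₁` or `N = N₂`. -/
def Submodule.IsGradedIrred {R M : Type*} [CommRing R] [AddCommGroup M] [Module R M]
    (ℳ : ℤ → AddSubgroup M) [DirectSum.Decomposition ℳ] (N : Submodule R M) : Prop :=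
  ∀ N₁ N₂ : Submodule R M, N₁.IsHomogeneousWrt ℳ → N₂.IsHomogeneousWrt ℳ →
    N = N₁ ⊓ N₂ → N = N₁ ∨ N = N₂

theorem gradedIrred_imp_irred_of_graded_decompositions
    {R M : Type*} [CommRing R] [IsNoetherianRing R] [AddCommGroup M] [Module R M]
    [Module.Finite R M] (𝒜 : ℤ → AddSubgroup R) [GradedRing 𝒜]
    (ℳ : ℤ → AddSubgroup M) [DirectSum.Decomposition ℳ] [SetLike.GradedSMul 𝒜 ℳ]
    (H : ∀ N : Submodule R M, N.IsHomogeneousWrt ℳ →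
      ∃ s : Finset (Submodule R M),
        (∀ P ∈ s, P.IsHomogeneousWrt ℳ ∧ P.IsIrred) ∧ N = s.inf id) :
    ∀ N : Submodule R M, N.IsHomogeneousWrt ℳ → N.IsGradedIrred ℳ → N.IsIrred := by
  have homog_inf : ∀ s : Finset (Submodule R M),
      (∀ P ∈ s, Submodule.IsHomogeneousWrt ℳ P) →
      Submodule.IsHomogeneousWrt ℳ (s.inf id) := by
    intro s hs i x hx
    rw [Submodule.mem_finsetInf] at hx ⊢
    exact fun P hP => hs P hP i x (hx P hP)
  have aux : ∀ s : Finset (Submodule R M), ∀ N : Submodule R M,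
      (∀ P ∈ s, P.IsHomogeneousWrt ℳ ∧ P.IsIrred) →
      N.IsGradedIrred ℳ → N = s.inf id → N.IsIrred := by
    intro s
    classical
    induction s using Finset.induction_on with
    | empty =>
      intro N _ _ hN
      simp only [Finset.inf_empty] at hN
      subst hN
      intro N₁ N₂ h
      exact Or.inl (le_antisymm (h.le.trans inf_le_left) le_top)
    | insert _ _ hP ih =>
      rename_i P s
      intro N hs hirr hN
      rw [Finset.inf_insert, id] at hN
      have hginf : (s.inf id).IsHomogeneousWrt ℳ :=
        homog_inf s fun Q hQ => (hs Q (Finset.mem_insert_of_mem hQ)).1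
      rcases hirr P (s.inf id) (hs P (Finset.mem_insert_self P s)).1 hginf hN with h | h
      · rw [h]; exact (hs P (Finset.mem_insert_self P s)).2
      · exact ih N (fun Q hQ => hs Q (Finset.mem_insert_of_mem hQ)) hirr h
  intro N hN hgi
  obtain ⟨s, hs, hNs⟩ := H N hN
  exact aux s N hs hgi hNs
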